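/- arXiv:math/9308217 — 10 statements merged into one kernel-verified Lean document; each statement's English description precedes it below -/
import Mathlib

section
/- Let T be a topology on Ω and μ an infinite cardinal. Call a subset X ⊆ Ω small if the family {X ∩ U : U ∈ T} has cardinality ≤ μ. Then the family I of small sets is a μ⁺-complete ideal on Ω containing all singletons: it is downward closed, and the union of at most μ small sets is small, provided that every subset of Ω of cardinality ≤ μ is small. -/
open Cardinal

open scoped Classical in
/-- Pick at most one element of a set. -/
noncomputable def pick {Ω : Type u} (A : Set Ω) : Set Ω :=
  if h : A.Nonempty then {h.choose} else ∅

open scoped Classical in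
lemma pick_subset {Ω : Type u} (A : Set Ω) : pick A ⊆ A := by
  unfold pick
  split
  · next h => intro x hx; rw [Set.mem_singleton_iff] at hx; exact hx ▸ h.choose_spec
  · exact Set.empty_subset A

open scoped Classical in
lemma mk_pick_le {Ω : Type u} (A : Set Ω) : #(pick A) ≤ 1 := by
  unfold pick
  split
  · simp
  · simp

open scoped Classical in
lemma pick_nonempty {Ω : Type u} {A : Set Ω} (h : A.Nonempty) : (pick A).Nonempty := by
  unfold pick
  rw [dif_pos h]
  exact Set.singleton_nonempty _

/-- `X` is small (for the family `T` of open sets and cardinal `μ`) if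
`{X ∩ U : U ∈ T}` has cardinality at most `μ`. -/
def IsSmall {Ω : Type u} (T : Set (Set Ω)) (μ : Cardinal.{u}) (X : Set Ω) : Prop :=
  #{V : Set Ω // ∃ U ∈ T, V = X ∩ U} ≤ μ

/-- the family of small sets is a `μ⁺`-complete ideal on `Ω`
containing all singletons: it contains singletons, is downward closed, and is
closed under unions of at most `μ` members, given that every subset of `Ω` of
cardinality `≤ μ` is small. -/
theorem stmt_2 {Ω : Type u} (T : Set (Set Ω)) (μ : Cardinal.{u}) (hμ : ℵ₀ ≤ μ)
    (hsmall : ∀ Z : Set Ω, #Z ≤ μ → IsSmall T μ Z) :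
    (∀ x : Ω, IsSmall T μ {x}) ∧
    (∀ X Y : Set Ω, Y ⊆ X → IsSmall T μ X → IsSmall T μ Y) ∧
    (∀ (ι : Type u) (X : ι → Set Ω), #ι ≤ μ → (∀ i, IsSmall T μ (X i)) →
      IsSmall T μ (⋃ i, X i)) := by
  classical
  refine ⟨?_, ?_, ?_⟩
  · -- singletons
    intro x
    apply hsmall
    calc #({x} : Set Ω) = 1 := Cardinal.mk_singleton x
      _ ≤ μ := le_trans Cardinal.one_le_aleph0 hμ
  · -- downward closed
    intro X Y hYX hX
    refine le_trans ?_ hX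
    have hinj : Function.Injective
        (fun V : {V : Set Ω // ∃ U ∈ T, V = Y ∩ U} =>
          (⟨X ∩ V.2.choose, V.2.choose, V.2.choose_spec.1, rfl⟩ :
            {V : Set Ω // ∃ U ∈ T, V = X ∩ U})) := by
      intro V V' h
      have h' : X ∩ V.2.choose = X ∩ V'.2.choose := congrArg Subtype.val h
      apply Subtype.ext
      rw [V.2.choose_spec.2, V'.2.choose_spec.2]
      calc Y ∩ V.2.choose = Y ∩ (X ∩ V.2.choose) := by
            rw [← Set.inter_assoc, Set.inter_eq_self_of_subset_left hYX]
        _ = Y ∩ (X ∩ V'.2.choose) := by rw [h']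
        _ = Y ∩ V'.2.choose := by
            rw [← Set.inter_assoc, Set.inter_eq_self_of_subset_left hYX]
    exact Cardinal.mk_le_of_injective hinj
  · -- μ⁺-completeness
    intro ι X hι hX
    set E : ι → Type u := fun i => {V : Set Ω // ∃ U ∈ T, V = X i ∩ U} with hE
    set Z : Set Ω := ⋃ p : (Σ i : ι, E i × E i), pick ((p.2.1 : Set Ω) \ (p.2.2 : Set Ω))
      with hZdef
    have hZμ : #Z ≤ μ := by
      calc #Z ≤ Cardinal.sum fun p : (Σ i : ι, E i × E i) =>
              #(pick ((p.2.1 : Set Ω) \ (p.2.2 : Set Ω))) := Cardinal.mk_iUnion_le_sum_mk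
        _ ≤ Cardinal.sum fun _ : (Σ i : ι, E i × E i) => 1 :=
            Cardinal.sum_le_sum _ _ fun p => mk_pick_le _
        _ = #(Σ i : ι, E i × E i) := by simp
        _ = Cardinal.sum fun i => #(E i × E i) := Cardinal.mk_sigma _
        _ ≤ Cardinal.sum fun _ : ι => μ := by
            apply Cardinal.sum_le_sum
            intro i
            have h1 : #(E i) ≤ μ := hX i
            have h2 : #(E i × E i) = #(E i) * #(E i) := by
              rw [Cardinal.mk_prod]; simp
            calc #(E i × E i) = #(E i) * #(E i) := h2
              _ ≤ μ * μ := mul_le_mul' h1 h1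
              _ = μ := Cardinal.mul_eq_self hμ
        _ = #ι * μ := by simp
        _ ≤ μ * μ := mul_le_mul' hι le_rfl
        _ = μ := Cardinal.mul_eq_self hμ
    have hZsmall : IsSmall T μ Z := hsmall Z hZμ
    -- separation helper
    have sep : ∀ (i : ι) (s t : E i), ((s : Set Ω) \ (t : Set Ω)).Nonempty →
        ∃ x ∈ Z, x ∈ (s : Set Ω) ∧ x ∉ (t : Set Ω) := by
      intro i s t h
      obtain ⟨x, hx⟩ := pick_nonempty h
      have hxd : x ∈ (s : Set Ω) \ (t : Set Ω) := pick_subset _ hx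
      refine ⟨x, ?_, hxd.1, hxd.2⟩
      rw [hZdef]
      exact Set.mem_iUnion.2 ⟨⟨i, s, t⟩, hx⟩
    have hinj : Function.Injective
        (fun V : {V : Set Ω // ∃ U ∈ T, V = (⋃ i, X i) ∩ U} =>
          (⟨Z ∩ V.2.choose, V.2.choose, V.2.choose_spec.1, rfl⟩ :
            {V : Set Ω // ∃ U ∈ T, V = Z ∩ U})) := by
      intro V V' h
      have hZeq : Z ∩ V.2.choose = Z ∩ V'.2.choose := congrArg Subtype.val h
      set U := V.2.choose with hU
      set U' := V'.2.choose with hU'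
      apply Subtype.ext
      rw [V.2.choose_spec.2, V'.2.choose_spec.2]
      by_contra hne
      have : ∃ i, X i ∩ U ≠ X i ∩ U' := by
        by_contra hall
        push_neg at hall
        apply hne
        rw [Set.iUnion_inter, Set.iUnion_inter]
        exact Set.iUnion_congr hall
      obtain ⟨i, hi⟩ := this
      set s : E i := ⟨X i ∩ U, U, V.2.choose_spec.1, rfl⟩ with hs
      set t : E i := ⟨X i ∩ U', U', V'.2.choose_spec.1, rfl⟩ with ht
      by_cases hcase : ((s : Set Ω) \ (t : Set Ω)).Nonempty
      · obtain ⟨x, hxZ, hxs, hxt⟩ := sep i s t hcase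
        have hxU : x ∈ U := hxs.2
        have hxU' : x ∉ U' := fun hx => hxt ⟨hxs.1, hx⟩
        have : x ∈ Z ∩ U' := hZeq ▸ ⟨hxZ, hxU⟩
        exact hxU' this.2
      · have hsub : (s : Set Ω) ⊆ (t : Set Ω) := by
          intro x hx
          by_contra hx'
          exact hcase ⟨x, hx, hx'⟩
        have hcase' : ((t : Set Ω) \ (s : Set Ω)).Nonempty := by
          rw [Set.nonempty_iff_ne_empty]
          intro hemp
          apply hi
          exact Set.Subset.antisymm hsub (Set.diff_eq_empty.mp hemp)
        obtain ⟨x, hxZ, hxt, hxs⟩ := sep i t s hcase'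
        have hxU' : x ∈ U' := hxt.2
        have hxU : x ∉ U := fun hx => hxs ⟨hxt.1, hx⟩
        have : x ∈ Z ∩ U := hZeq ▸ ⟨hxZ, hxU'⟩
        exact hxU this.2
    exact le_trans (Cardinal.mk_le_of_injective hinj) hZsmall
end

section
/- Let T be a topology on Ω, μ an infinite cardinal, and suppose every subset of Ω of cardinality ≤ μ is small (i.e. {Z ∩ U : U ∈ T} has size ≤ μ). If |T| > μ then |Ω| > μ, and moreover there exist T' ⊆ T and Ω' ⊆ Ω, both of cardinality μ⁺, such that distinct members of T' have distinct traces on Ω'. -/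
open Cardinal

/-- if every subset of `Ω` of cardinality `≤ μ` is small and
`|T| > μ`, then `|Ω| > μ` and there are `T' ⊆ T` and `Ω' ⊆ Ω`, both of
cardinality `μ⁺`, such that distinct members of `T'` have distinct traces
on `Ω'`. -/
theorem stmt_3 {Ω : Type u} (T : Set (Set Ω)) (μ : Cardinal.{u}) (hμ : ℵ₀ ≤ μ)
    (hsmall : ∀ Z : Set Ω, #Z ≤ μ → #{V : Set Ω // ∃ U ∈ T, V = Z ∩ U} ≤ μ)
    (hT : μ < #T) :
    μ < #Ω ∧
    ∃ T' : Set (Set Ω), T' ⊆ T ∧ #T' = Order.succ μ ∧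
      ∃ Ω' : Set Ω, #Ω' = Order.succ μ ∧
        ∀ U ∈ T', ∀ V ∈ T', U ≠ V → U ∩ Ω' ≠ V ∩ Ω' := by
  -- First: μ < #Ω
  have hΩ : μ < #Ω := by
    by_contra h
    push_neg at h
    have h1 : #(Set.univ : Set Ω) ≤ μ := by simpa using h
    have h2 := hsmall Set.univ h1
    have hinj : Function.Injective
        (fun U : T => (⟨Set.univ ∩ U.1, U.1, U.2, rfl⟩ :
          {V : Set Ω // ∃ U ∈ T, V = Set.univ ∩ U})) := by
      intro U V hUV
      have : Set.univ ∩ U.1 = Set.univ ∩ V.1 := congrArg Subtype.val hUV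
      simpa [Set.univ_inter, Subtype.ext_iff] using this
    have : #T ≤ μ := le_trans (Cardinal.mk_le_of_injective hinj) h2
    exact absurd this (not_le.2 hT)
  refine ⟨hΩ, ?_⟩
  have hne : Nonempty Ω := by
    rw [← Cardinal.mk_ne_zero_iff]
    exact ne_of_gt (lt_of_le_of_lt (by positivity) hΩ)
  -- choose separating points
  have key : ∀ U V : Set Ω, U ≠ V → ∃ x, (x ∈ U ∧ x ∉ V) ∨ (x ∈ V ∧ x ∉ U) := by
    intro U V h
    by_contra hc
    push_neg at hc
    exact h (Set.ext fun x => ⟨fun hx => (hc x).1 hx, fun hx => (hc x).2 hx⟩)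
  choose! f hf using key
  -- basic cardinal facts about μ⁺
  have hsuccμ : ℵ₀ ≤ Order.succ μ := le_trans hμ (Order.le_succ μ)
  -- T' of size μ⁺
  have hT' : Order.succ μ ≤ #T := Order.succ_le_of_lt hT
  obtain ⟨T', hT'sub, hT'card⟩ := Cardinal.le_mk_iff_exists_subset.1 hT'
  -- separating set
  set sep : Set Ω := Set.range (fun p : T' × T' => f p.1.1 p.2.1) with hsep
  have hsepcard : #sep ≤ Order.succ μ := by
    refine le_trans Cardinal.mk_range_le ?_
    rw [Cardinal.mk_prod]; simp only [Cardinal.lift_id]; rw [hT'card]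
    exact le_of_eq (Cardinal.mul_eq_self hsuccμ)
  -- padding set
  obtain ⟨S, hScard⟩ := Cardinal.le_mk_iff_exists_set.1 (Order.succ_le_of_lt hΩ)
  refine ⟨T', hT'sub, hT'card, sep ∪ S, ?_, ?_⟩
  · refine le_antisymm ?_ ?_
    · refine le_trans (Cardinal.mk_union_le _ _) ?_
      rw [hScard]
      calc #sep + Order.succ μ ≤ Order.succ μ + Order.succ μ := by
            exact add_le_add_left hsepcard _
        _ = Order.succ μ := Cardinal.add_eq_self hsuccμ
    · rw [← hScard]
      exact Cardinal.mk_le_mk_of_subset Set.subset_union_right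
  · intro U hU V hV hUV heq
    have hx := hf U V hUV
    have hxsep : f U V ∈ sep := ⟨(⟨⟨U, hU⟩, ⟨V, hV⟩⟩ : T' × T'), rfl⟩
    have hxΩ' : f U V ∈ sep ∪ S := Or.inl hxsep
    rcases hx with ⟨h1, h2⟩ | ⟨h1, h2⟩
    · have : f U V ∈ V ∩ (sep ∪ S) := heq ▸ ⟨h1, hxΩ'⟩
      exact h2 this.1
    · have : f U V ∈ U ∩ (sep ∪ S) := heq.symm ▸ ⟨h1, hxΩ'⟩
      exact h2 this.1
end

section
/- In a linear order I with interval rank rk_I as defined, if rk_I(x,y) = ∞ (i.e., rk_I(x,y) is not equal to any ordinal), then the interval (x,y)_I has at least λ^{ℵ₀} Dedekind cuts, where λ is a strong limit cardinal of cofinality ℵ₀ written as the supremum of an increasing sequence of regular cardinals λ_n. -/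
open Cardinal

/-- with the interval rank `rk` as in Statement 5, where
`lam = ⨆ n, lamn n` is strong limit of cofinality `ℵ₀` with `lamn` an increasing
sequence of regular cardinals, if `rk x y = ∞` (i.e. `rk x y a` holds for no
ordinal `a`) then the interval `(x, y)` has at least `lam ^ ℵ₀` Dedekind cuts. -/
theorem stmt_6 {α : Type u} [LinearOrder α] (lam : Cardinal.{u}) (lamn : ℕ → Cardinal.{u})
    (hsl : lam.IsStrongLimit) (hcof : lam.ord.cof = ℵ₀)
    (hreg : ∀ n, (lamn n).IsRegular) (hmono : ∀ n, lamn n < lamn (n + 1))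
    (hsup : lam = ⨆ n, lamn n)
    (rk : α → α → Ordinal.{u} → Prop)
    (hrk0 : ∀ x y : α, x < y → (rk x y 0 ↔ #(Set.Ioo x y) < lam))
    (hrkpos : ∀ (x y : α) (a : Ordinal.{u}), x < y → 0 < a →
      (rk x y a ↔ (∀ b < a, ¬ rk x y b) ∧
        ∀ (ι : Type u) (xi yi : ι → α), #ι = lam →
          (∀ i, x < xi i ∧ xi i < yi i ∧ yi i < y) →
          (∀ i j, i ≠ j → Disjoint (Set.Ioo (xi i) (yi i)) (Set.Ioo (xi j) (yi j))) →
          ∃ i, ∃ b < a, rk (xi i) (yi i) b))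
    (x y : α) (hxy : x < y) (hinf : ∀ a : Ordinal.{u}, ¬ rk x y a) :
    lam ^ ℵ₀ ≤ #{A : Set (Set.Ioo x y) // IsLowerSet A} := by
  classical
  -- ranks are unique when they exist
  have hlt : ∀ u v : α, u < v → ∀ a b : Ordinal.{u}, a < b → rk u v a → ¬ rk u v b := by
    intro u v huv a b hab ha hb
    exact ((hrkpos u v b huv (lt_of_le_of_lt (zero_le (a := a)) hab)).mp hb).1 a hab ha
  have huniq : ∀ u v : α, u < v → ∀ a b : Ordinal.{u}, rk u v a → rk u v b → a = b := by
    intro u v huv a b ha hb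
    rcases lt_trichotomy a b with h | h | h
    · exact absurd hb (hlt u v huv a b h ha)
    · exact h
    · exact absurd ha (hlt u v huv b a h hb)
  -- an ordinal strictly above all attained ranks
  set f : α × α → Ordinal.{u} := fun p =>
    if h : ∃ b, p.1 < p.2 ∧ rk p.1 p.2 b then h.choose + 1 else 0 with hf
  set astar : Ordinal.{u} := iSup f + 1 with hastar
  have hsuccsucc : ∀ c : Ordinal.{u}, c < c + 1 := by
    intro c
    rw [Ordinal.add_one_eq_succ]
    exact Order.lt_succ c
  have hapos : (0 : Ordinal.{u}) < astar :=
    lt_of_le_of_lt zero_le (hsuccsucc _)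
  have hbound : ∀ u v : α, ∀ b : Ordinal.{u}, u < v → rk u v b → b < astar := by
    intro u v b huv hb
    have hex : ∃ c, u < v ∧ rk u v c := ⟨b, huv, hb⟩
    have h1 : f (u, v) = hex.choose + 1 := dif_pos hex
    have h2 : hex.choose = b := huniq u v huv _ _ hex.choose_spec.2 hb
    have h3 : b + 1 ≤ iSup f := by
      rw [← h2, ← h1]
      exact le_ciSup (Ordinal.bddAbove_range f) (u, v)
    exact lt_of_lt_of_le (lt_of_lt_of_le (hsuccsucc b) h3) (le_of_lt (hsuccsucc _))
  -- "good" intervals: nonempty and of rank ∞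
  set Good : α → α → Prop := fun u v => u < v ∧ ∀ a, ¬ rk u v a with hGoodDef
  -- splitting lemma: every good interval contains lam disjoint good subintervals
  have hsplit : ∀ u v : α, Good u v → ∃ xi yi : (Quotient.out lam) → α,
      (∀ i, u < xi i ∧ xi i < yi i ∧ yi i < v) ∧
      (∀ i j, i ≠ j → Disjoint (Set.Ioo (xi i) (yi i)) (Set.Ioo (xi j) (yi j))) ∧
      (∀ i, Good (xi i) (yi i)) := by
    rintro u v ⟨huv, hg⟩
    have hmp := hrkpos u v astar huv hapos
    have hnB : ¬ ∀ (ι : Type u) (xi yi : ι → α), #ι = lam →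
        (∀ i, u < xi i ∧ xi i < yi i ∧ yi i < v) →
        (∀ i j, i ≠ j → Disjoint (Set.Ioo (xi i) (yi i)) (Set.Ioo (xi j) (yi j))) →
        ∃ i, ∃ b < astar, rk (xi i) (yi i) b := by
      intro hB
      exact hg astar (hmp.mpr ⟨fun b _ => hg b, hB⟩)
    push_neg at hnB
    obtain ⟨ι, xi0, yi0, hι, hin0, hdis0, hnr⟩ := hnB
    obtain ⟨e⟩ : Nonempty ((Quotient.out lam) ≃ ι) := by
      rw [← Cardinal.eq, Cardinal.mk_out, hι]
    refine ⟨xi0 ∘ e, yi0 ∘ e, fun i => hin0 (e i),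
      fun i j hij => hdis0 (e i) (e j) (fun h => hij (e.injective h)),
      fun i => ⟨(hin0 (e i)).2.1, fun a ha =>
        hnr (e i) a (hbound _ _ a (hin0 (e i)).2.1 ha) ha⟩⟩
  choose X Y hin hdis hgd using hsplit
  -- the tree of nested good intervals
  let child : {p : α × α // Good p.1 p.2} → (Quotient.out lam) → {p : α × α // Good p.1 p.2} :=
    fun p i => ⟨(X p.1.1 p.1.2 p.2 i, Y p.1.1 p.1.2 p.2 i), hgd p.1.1 p.1.2 p.2 i⟩
  have hroot : Good x y := ⟨hxy, hinf⟩
  let node : (ℕ → Quotient.out lam) → ℕ → {p : α × α // Good p.1 p.2} :=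
    fun σ n => Nat.rec ⟨(x, y), hroot⟩ (fun m p => child p (σ m)) n
  let A : (ℕ → Quotient.out lam) → ℕ → α := fun σ n => (node σ n).1.1
  let B : (ℕ → Quotient.out lam) → ℕ → α := fun σ n => (node σ n).1.2
  have hAB : ∀ σ n, A σ n < A σ (n+1) ∧ A σ (n+1) < B σ (n+1) ∧ B σ (n+1) < B σ n := by
    intro σ n
    exact hin (node σ n).1.1 (node σ n).1.2 (node σ n).2 (σ n)
  have hAmono : ∀ σ, StrictMono (A σ) := fun σ =>
    strictMono_nat_of_lt_succ (fun n => (hAB σ n).1)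
  have hBanti : ∀ σ, StrictAnti (B σ) := fun σ =>
    strictAnti_nat_of_succ_lt (fun n => (hAB σ n).2.2)
  have hAltB : ∀ σ n, A σ n < B σ n := fun σ n => (node σ n).2.1
  have hmem : ∀ σ n, A σ (n+1) ∈ Set.Ioo x y := by
    intro σ n
    constructor
    · exact hAmono σ (Nat.succ_pos n)
    · exact lt_of_lt_of_le (hAltB σ (n+1)) (le_of_lt (hBanti σ (Nat.succ_pos n)))
  -- the Dedekind cuts
  let C : (ℕ → Quotient.out lam) → Set (Set.Ioo x y) := fun σ => {z | ∃ n, (z : α) ≤ A σ (n+1)}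
  have hlow : ∀ σ, IsLowerSet (C σ) := by
    intro σ a b hba ha
    obtain ⟨n, hn⟩ := ha
    exact ⟨n, le_trans (Subtype.coe_le_coe.mpr hba) hn⟩
  have hagree : ∀ σ τ : ℕ → Quotient.out lam, ∀ n, (∀ m < n, σ m = τ m) →
      node σ n = node τ n := by
    intro σ τ n
    induction n with
    | zero => intro _; rfl
    | succ n ih =>
      intro h
      have h1 := ih (fun m hm => h m (hm.trans (Nat.lt_succ_self n)))
      show child (node σ n) (σ n) = child (node τ n) (τ n)
      rw [h1, h n (Nat.lt_succ_self n)]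
  have hinj : Function.Injective C := by
    intro σ τ hC
    by_contra hne
    have hex : ∃ n, σ n ≠ τ n := by
      by_contra h
      push_neg at h
      exact hne (funext h)
    set n := Nat.find hex with hn_def
    have hn : σ n ≠ τ n := Nat.find_spec hex
    have hlt' : ∀ m < n, σ m = τ m := by
      intro m hm
      by_contra h
      exact Nat.find_min hex hm h
    have hnd : node σ n = node τ n := hagree σ τ n hlt'
    have hApre : ∀ m ≤ n, A σ m = A τ m := fun m hm =>
      congrArg (fun p => p.1.1) (hagree σ τ m (fun k hk => hlt' k (lt_of_lt_of_le hk hm)))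
    have hdisj : Disjoint (Set.Ioo (A σ (n+1)) (B σ (n+1)))
        (Set.Ioo (A τ (n+1)) (B τ (n+1))) := by
      have e1 : node τ (n+1) = child (node σ n) (τ n) := by
        show child (node τ n) (τ n) = child (node σ n) (τ n)
        rw [hnd]
      have e2 : A τ (n+1) = X (node σ n).1.1 (node σ n).1.2 (node σ n).2 (τ n) := by
        show (node τ (n+1)).1.1 = _
        rw [e1]
      have e3 : B τ (n+1) = Y (node σ n).1.1 (node σ n).1.2 (node σ n).2 (τ n) := by
        show (node τ (n+1)).1.2 = _
        rw [e1]
      rw [e2, e3]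
      exact hdis (node σ n).1.1 (node σ n).1.2 (node σ n).2 (σ n) (τ n) hn
    have hw1 : A σ (n+2) ∈ Set.Ioo (A σ (n+1)) (B σ (n+1)) :=
      ⟨(hAB σ (n+1)).1, lt_trans (hAB σ (n+1)).2.1 (hAB σ (n+1)).2.2⟩
    have hw2 : A τ (n+2) ∈ Set.Ioo (A τ (n+1)) (B τ (n+1)) :=
      ⟨(hAB τ (n+1)).1, lt_trans (hAB τ (n+1)).2.1 (hAB τ (n+1)).2.2⟩
    have h1 : A τ (n+2) ∉ Set.Ioo (A σ (n+1)) (B σ (n+1)) :=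
      Set.disjoint_right.mp hdisj hw2
    have h2 : A σ (n+2) ∉ Set.Ioo (A τ (n+1)) (B τ (n+1)) :=
      Set.disjoint_left.mp hdisj hw1
    -- key separation claim
    have key : ∀ σ' τ' : ℕ → Quotient.out lam, (∀ m ≤ n, A σ' m = A τ' m) →
        B σ' (n+1) ≤ A τ' (n+2) → C σ' ≠ C τ' := by
      intro σ' τ' hpre hBle hCeq
      have hwmem : A τ' (n+2) ∈ Set.Ioo x y := hmem τ' (n+1)
      have hin2 : (⟨A τ' (n+2), hwmem⟩ : Set.Ioo x y) ∈ C τ' := ⟨n+1, le_rfl⟩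
      rw [← hCeq] at hin2
      obtain ⟨m, hm⟩ := hin2
      rcases Nat.lt_or_ge m n with hcase | hcase
      · have heq : A σ' (m+1) = A τ' (m+1) := hpre (m+1) hcase
        have hlt2 : A τ' (m+1) < A τ' (n+2) := hAmono τ' (show m+1 < n+2 by omega)
        rw [heq] at hm
        exact absurd hm (not_le.mpr hlt2)
      · have hb : B σ' (m+1) ≤ B σ' (n+1) := (hBanti σ').antitone (show n+1 ≤ m+1 by omega)
        have hlt3 : A σ' (m+1) < A τ' (n+2) :=
          lt_of_lt_of_le (hAltB σ' (m+1)) (le_trans hb hBle)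
        exact absurd hm (not_le.mpr hlt3)
    by_cases hc1 : B σ (n+1) ≤ A τ (n+2)
    · exact key σ τ (fun m hm => hApre m hm) hc1 hC
    · push_neg at hc1
      have hw2le : A τ (n+2) ≤ A σ (n+1) := by
        by_contra h
        push_neg at h
        exact h1 ⟨h, hc1⟩
      by_cases hc2 : B τ (n+1) ≤ A σ (n+2)
      · exact key τ σ (fun m hm => (hApre m hm).symm) hc2 hC.symm
      · push_neg at hc2
        have hw1le : A σ (n+2) ≤ A τ (n+1) := by
          by_contra h
          push_neg at h
          exact h2 ⟨h, hc2⟩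
        have : A τ (n+1) < A τ (n+1) :=
          lt_of_lt_of_le (lt_of_le_of_lt (le_of_lt hw2.1)
            (lt_of_le_of_lt hw2le (hAmono σ (Nat.lt_succ_self (n+1))))) hw1le
        exact lt_irrefl _ this
  -- conclude
  have hmap : Function.Injective
      (fun σ : ℕ → Quotient.out lam =>
        (⟨C σ, hlow σ⟩ : {S : Set (Set.Ioo x y) // IsLowerSet S})) := by
    intro σ τ h
    exact hinj (congrArg Subtype.val h)
  have hle := Cardinal.mk_le_of_injective hmap
  calc lam ^ ℵ₀ = #(Quotient.out lam) ^ #(ULift.{u} ℕ) := by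
        rw [Cardinal.mk_out, Cardinal.mk_denumerable]
    _ = #(ULift.{u} ℕ → Quotient.out lam) := (Cardinal.power_def _ _).symm
    _ = #(ℕ → Quotient.out lam) :=
        Cardinal.mk_congr (Equiv.arrowCongr Equiv.ulift (Equiv.refl _))
    _ ≤ _ := hle
end

section
/- Let T be a topology on Ω with base B of cardinality ≤ μ, and let ⪯ be the specialization preorder (x ⪯ y iff every basic open set containing y contains x), assumed to be a partial order. If J ⊆ Ω is linearly ordered by ⪯, then there is a subset I ⊆ J of cardinality ≤ μ which is dense in J: for all x ≺ y ≺ z in J there exists w ∈ I with x ≺ w ≺ z. -/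
open Cardinal

/-- The specialization preorder of a base `B`: `x ⪯ y` iff every `U ∈ B`
containing `y` contains `x`. -/
def SpecLE {Ω : Type u} (B : Set (Set Ω)) (x y : Ω) : Prop :=
  ∀ U ∈ B, y ∈ U → x ∈ U

/-- if `B` is a base of cardinality `≤ μ`, any two distinct points
are separated by a member of `B` (so `⪯` is a partial order), and `J ⊆ Ω` is a
`⪯`-chain, then some `I ⊆ J` of cardinality `≤ μ` is dense in `J`: whenever
`x ≺ y ≺ z` in `J` there is `w ∈ I` with `x ≺ w ≺ z`. -/
theorem stmt_9 {Ω : Type u} (B : Set (Set Ω)) (μ : Cardinal.{u})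
    (hμ : ℵ₀ ≤ μ) (hB : #B ≤ μ)
    (hsep : ∀ x y : Ω, x ≠ y → ∃ U ∈ B, (x ∈ U ↔ y ∉ U))
    (J : Set Ω) (hchain : ∀ x ∈ J, ∀ y ∈ J, SpecLE B x y ∨ SpecLE B y x) :
    ∃ I : Set Ω, I ⊆ J ∧ #I ≤ μ ∧
      ∀ x ∈ J, ∀ y ∈ J, ∀ z ∈ J,
        (SpecLE B x y ∧ x ≠ y) → (SpecLE B y z ∧ y ≠ z) →
        ∃ w ∈ I, (SpecLE B x w ∧ x ≠ w) ∧ (SpecLE B w z ∧ w ≠ z) := by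
  classical
  set S := {p : Set Ω × Set Ω // p.1 ∈ B ∧ p.2 ∈ B ∧ (J ∩ (p.1 \ p.2)).Nonempty}
    with hS
  let f : S → Ω := fun p => p.2.2.2.choose
  have hf : ∀ p : S, f p ∈ J ∩ (p.1.1 \ p.1.2) := fun p => p.2.2.2.choose_spec
  refine ⟨Set.range f, ?_, ?_, ?_⟩
  · rintro w ⟨p, rfl⟩; exact (hf p).1
  · have hinj : Function.Injective
        (fun p : S => ((⟨p.1.1, p.2.1⟩, ⟨p.1.2, p.2.2.1⟩) : B × B)) := by
      rintro ⟨⟨a, b⟩, _⟩ ⟨⟨c, d⟩, _⟩ h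
      simp only [Prod.mk.injEq, Subtype.mk.injEq] at h
      simp [h.1, h.2]
    calc #(Set.range f) ≤ #S := Cardinal.mk_range_le
      _ ≤ #(B × B) := Cardinal.mk_le_of_injective hinj
      _ = #B * #B := by simp [Cardinal.mk_prod]
      _ ≤ μ * μ := mul_le_mul' hB hB
      _ = μ := Cardinal.mul_eq_self hμ
  · rintro x hxJ y hyJ z hzJ ⟨hxy, hxyne⟩ ⟨hyz, hyzne⟩
    obtain ⟨U, hU, hUsep⟩ := hsep x y hxyne
    have hxU : x ∈ U ∧ y ∉ U := by
      by_cases hy : y ∈ U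
      · exact absurd (hUsep.mp (hxy U hU hy)) (not_not_intro hy)
      · exact ⟨hUsep.mpr hy, hy⟩
    obtain ⟨V, hV, hVsep⟩ := hsep y z hyzne
    have hyV : y ∈ V ∧ z ∉ V := by
      by_cases hz : z ∈ V
      · exact absurd (hVsep.mp (hyz V hV hz)) (not_not_intro hz)
      · exact ⟨hVsep.mpr hz, hz⟩
    have hp : ((V, U) : Set Ω × Set Ω).1 ∈ B ∧ ((V, U) : Set Ω × Set Ω).2 ∈ B ∧
        (J ∩ (((V, U) : Set Ω × Set Ω).1 \ ((V, U) : Set Ω × Set Ω).2)).Nonempty :=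
      ⟨hV, hU, ⟨y, hyJ, hyV.1, hxU.2⟩⟩
    set p : S := ⟨(V, U), hp⟩ with hpdef
    obtain ⟨hwJ, hwV, hwU⟩ := hf p
    refine ⟨f p, ⟨p, rfl⟩, ⟨?_, ?_⟩, ?_, ?_⟩
    · rcases hchain x hxJ (f p) hwJ with h | h
      · exact h
      · exact absurd (h U hU hxU.1) hwU
    · rintro rfl; exact hwU hxU.1
    · rcases hchain (f p) hwJ z hzJ with h | h
      · exact h
      · exact absurd (h V hV hwV) hyV.2
    · rintro rfl; exact hyV.2 hwV
end

section
/- Let J be a linear order and I ⊆ J a dense subset (between any two elements of J with something strictly between them lies an element of I). Then every Dedekind cut of I is the restriction of at most 3 Dedekind cuts of J; consequently the number of Dedekind cuts of J is at most 3 times the number of Dedekind cuts of I. -/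
open Cardinal

theorem four_chain_aux {α : Type u} [LinearOrder α] (I : Set α)
    (hdense : ∀ x y z : α, x < y → y < z → ∃ w ∈ I, x < w ∧ w < z)
    (Y₁ Y₂ Y₃ Y₄ : Set α)
    (h₁ : IsLowerSet Y₁) (h₂ : IsLowerSet Y₂) (h₃ : IsLowerSet Y₃) (h₄ : IsLowerSet Y₄)
    (s₁ : Y₁ ⊂ Y₂) (s₂ : Y₂ ⊂ Y₃) (s₃ : Y₃ ⊂ Y₄) :
    ¬ (Y₁ ∩ I = Y₂ ∩ I ∧ Y₂ ∩ I = Y₃ ∩ I ∧ Y₃ ∩ I = Y₄ ∩ I) := by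
  rintro ⟨e₁, e₂, e₃⟩
  obtain ⟨a, ha2, ha1⟩ := Set.exists_of_ssubset s₁
  obtain ⟨b, hb3, hb2⟩ := Set.exists_of_ssubset s₂
  obtain ⟨c, hc4, hc3⟩ := Set.exists_of_ssubset s₃
  have hab : a < b := by
    by_contra h
    exact hb2 (h₂ (not_lt.1 h) ha2)
  have hbc : b < c := by
    by_contra h
    exact hc3 (h₃ (not_lt.1 h) hb3)
  obtain ⟨w, hwI, haw, hwc⟩ := hdense a b c hab hbc
  have hw4 : w ∈ Y₄ ∩ I := ⟨h₄ hwc.le hc4, hwI⟩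
  have hw1 : w ∈ Y₁ ∩ I := by rw [e₁, e₂, e₃]; exact hw4
  exact ha1 (h₁ haw.le hw1.1)

/-- if `I` is dense in the linear order `J` (between any two
elements with something strictly between lies a member of `I`), then lower
parts `Y₁ ⊊ Y₂ ⊊ Y₃ ⊊ Y₄` of four distinct Dedekind cuts of `J` cannot all have
the same restriction to `I`; consequently the number of Dedekind cuts of `J` is
at most `3` times the number of Dedekind cuts of `I`. -/
theorem stmt_10 {α : Type u} [LinearOrder α] (I : Set α)
    (hdense : ∀ x y z : α, x < y → y < z → ∃ w ∈ I, x < w ∧ w < z) :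
    (∀ Y₁ Y₂ Y₃ Y₄ : Set α,
      IsLowerSet Y₁ → IsLowerSet Y₂ → IsLowerSet Y₃ → IsLowerSet Y₄ →
      Y₁ ⊂ Y₂ → Y₂ ⊂ Y₃ → Y₃ ⊂ Y₄ →
      ¬ (Y₁ ∩ I = Y₂ ∩ I ∧ Y₂ ∩ I = Y₃ ∩ I ∧ Y₃ ∩ I = Y₄ ∩ I)) ∧
    #{A : Set α // IsLowerSet A} ≤ 3 * #{A : Set I // IsLowerSet A} := by
  classical
  refine ⟨fun Y₁ Y₂ Y₃ Y₄ h₁ h₂ h₃ h₄ s₁ s₂ s₃ =>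
    four_chain_aux I hdense Y₁ Y₂ Y₃ Y₄ h₁ h₂ h₃ h₄ s₁ s₂ s₃, ?_⟩
  set T := {A : Set α // IsLowerSet A}
  letI : LinearOrder T :=
    { (inferInstance : PartialOrder T) with
      le_total := fun A B => A.2.total B.2
      toDecidableLE := Classical.decRel _ }
  set f : T → {A : Set I // IsLowerSet A} :=
    fun A => ⟨Subtype.val ⁻¹' A.1, fun x y hxy hx => A.2 (Subtype.coe_le_coe.2 hxy) hx⟩ with hf
  rw [mul_comm]
  refine mk_le_mk_mul_of_mk_preimage_le f (fun B => ?_)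
  by_contra h
  have h4 : ((4 : ℕ) : Cardinal) ≤ #(f ⁻¹' {B}) := by
    rw [Cardinal.nat_succ]
    exact Order.succ_le_of_lt (by exact_mod_cast not_le.1 h)
  obtain ⟨t₀, ht₀⟩ := Cardinal.exists_finset_le_card (f ⁻¹' {B}) 4 h4
  obtain ⟨t, -, hcard⟩ := Finset.exists_subset_card_eq ht₀
  set e : Fin 4 ≃o t := t.orderIsoOfFin hcard with he
  have hmono : ∀ i j : Fin 4, i < j → ((e i : f ⁻¹' {B}) : T).1 ⊂ ((e j : f ⁻¹' {B}) : T).1 := by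
    intro i j hij
    have := e.strictMono hij
    exact this
  have hfib : ∀ i : Fin 4, f ((e i : f ⁻¹' {B}) : T) = B := fun i => (e i).1.2
  have key : ∀ i : Fin 4, I ∩ ((e i : f ⁻¹' {B}) : T).1
      = Subtype.val '' ((f ((e i : f ⁻¹' {B}) : T)).1 : Set I) :=
    fun i => (Subtype.image_preimage_coe I _).symm
  have hrestr : ∀ i j : Fin 4, ((e i : f ⁻¹' {B}) : T).1 ∩ I = ((e j : f ⁻¹' {B}) : T).1 ∩ I := by
    intro i j
    rw [Set.inter_comm, Set.inter_comm ((e j : f ⁻¹' {B}) : T).1, key i, key j, hfib i, hfib j]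
  exact four_chain_aux I hdense _ _ _ _
    ((e 0 : f ⁻¹' {B}) : T).2 ((e 1 : f ⁻¹' {B}) : T).2
    ((e 2 : f ⁻¹' {B}) : T).2 ((e 3 : f ⁻¹' {B}) : T).2
    (hmono 0 1 (by decide)) (hmono 1 2 (by decide)) (hmono 2 3 (by decide))
    ⟨hrestr 0 1, hrestr 1 2, hrestr 2 3⟩
end

section
/- Let Ω be a set of cardinality λ, where λ is a strong limit cardinal of cofinality ℵ₀, let ⟨Z_ε : ε < κ⟩ (κ < λ) be a partition of Ω, and let ⟨U_ζ : ζ < λ⟩ be a list of subsets of Ω. Suppose T is a family of subsets of Ω with |T| > λ. Then there exists U ∈ T such that for every ξ < λ there are points α, β ∈ Ω with: α ∈ U ↔ β ∉ U; for all ζ < ξ, α ∈ U_ζ ↔ β ∈ U_ζ; and for all ε < κ, α ∈ Z_ε ↔ β ∈ Z_ε. -/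
open Cardinal

/-- if `lam` is strong limit of cofinality `ℵ₀`, `|Ω| = lam`,
`⟨Z ε : ε < κ⟩` (`κ < lam`) is a partition of `Ω`, `⟨Us ζ : ζ < lam⟩` a list of
subsets of `Ω` (indexed by ordinals below `lam.ord`), and `|T| > lam`, then
some `U ∈ T` satisfies: for every `ξ < lam.ord` there are `α β ∈ Ω` with
`α ∈ U ↔ β ∉ U`, agreeing on each `Us ζ` for `ζ < ξ` and on each `Z ε`. -/
theorem stmt_13 {Ω : Type u} (T : Set (Set Ω)) (lam : Cardinal.{u})
    (hsl : lam.IsStrongLimit) (hcof : lam.ord.cof = ℵ₀)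
    (hΩ : #Ω = lam) (hT : lam < #T)
    (κ : Cardinal.{u}) (hκ : κ < lam) (ι : Type u) (hι : #ι = κ)
    (Z : ι → Set Ω) (hdisj : ∀ i j, i ≠ j → Disjoint (Z i) (Z j))
    (hcover : (⋃ i, Z i) = Set.univ)
    (Us : Ordinal.{u} → Set Ω) :
    ∃ U ∈ T, ∀ ξ < lam.ord, ∃ α β : Ω,
      (α ∈ U ↔ β ∉ U) ∧
      (∀ ζ < ξ, (α ∈ Us ζ ↔ β ∈ Us ζ)) ∧
      (∀ ε : ι, (α ∈ Z ε ↔ β ∈ Z ε)) := by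
  classical
  have hles : ℵ₀ ≤ lam := hsl.aleph0_le
  -- the coding function for each ξ
  let code : ∀ ξ : Ordinal.{u}, Ω → (ξ.ToType → Prop) × (ι → Prop) :=
    fun ξ α => (fun t => α ∈ Us ((Ordinal.ToType.mk (o := ξ)).symm t : Ordinal), fun ε => α ∈ Z ε)
  -- sets that are unions of E_ξ classes
  let S : Ordinal.{u} → Set (Set Ω) :=
    fun ξ => {U | ∀ α β, code ξ α = code ξ β → (α ∈ U ↔ β ∈ U)}
  -- each S ξ is small for ξ < lam.ord
  have hS : ∀ ξ < lam.ord, #(S ξ) < lam := by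
    intro ξ hξ
    have hinj : Function.Injective
        (fun U : S ξ => (code ξ '' (U : Set Ω) : Set ((ξ.ToType → Prop) × (ι → Prop)))) := by
      rintro ⟨U, hU⟩ ⟨V, hV⟩ h
      simp only at h
      simp only [Subtype.mk.injEq]
      ext α
      constructor
      · intro hα
        have : code ξ α ∈ code ξ '' V := by rw [← h]; exact ⟨α, hα, rfl⟩
        obtain ⟨β, hβ, hcode⟩ := this
        exact (hV β α hcode).mp hβ
      · intro hα
        have : code ξ α ∈ code ξ '' U := by rw [h]; exact ⟨α, hα, rfl⟩
        obtain ⟨β, hβ, hcode⟩ := this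
        exact (hU β α hcode).mp hβ
    have h1 : #(S ξ) ≤ #(Set ((ξ.ToType → Prop) × (ι → Prop))) :=
      Cardinal.mk_le_of_injective hinj
    have h2 : #((ξ.ToType → Prop) × (ι → Prop)) < lam := by
      rw [Cardinal.mk_prod, Cardinal.lift_id, Cardinal.lift_id]
      have ha : #(ξ.ToType → Prop) < lam := by
        rw [show (ξ.ToType → Prop) = Set ξ.ToType from rfl, Cardinal.mk_set,
          Cardinal.mk_toType]
        exact hsl.two_power_lt (Cardinal.lt_ord.mp hξ)
      have hb : #(ι → Prop) < lam := by
        rw [show (ι → Prop) = Set ι from rfl, Cardinal.mk_set, hι]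
        exact hsl.two_power_lt hκ
      exact Cardinal.mul_lt_of_lt hles ha hb
    calc #(S ξ) ≤ _ := h1
      _ = 2 ^ #((ξ.ToType → Prop) × (ι → Prop)) := Cardinal.mk_set
      _ < lam := hsl.two_power_lt h2
  -- the union of all the S ξ's
  let B : Set (Set Ω) := ⋃ i : lam.ord.ToType, S ((Ordinal.ToType.mk (o := lam.ord)).symm i : Ordinal)
  have hB : #B ≤ lam := by
    calc #B ≤ #(lam.ord.ToType) * ⨆ i : lam.ord.ToType,
          #(S ((Ordinal.ToType.mk (o := lam.ord)).symm i : Ordinal)) := Cardinal.mk_iUnion_le _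
      _ ≤ lam * lam := by
          apply mul_le_mul'
          · rw [Cardinal.mk_toType, Cardinal.card_ord]
          · exact ciSup_le' fun i =>
              (hS _ ((Ordinal.ToType.mk (o := lam.ord)).symm i).2).le
      _ = lam := Cardinal.mul_eq_self hles
  -- find U ∈ T with U ∉ B
  have : ¬ T ⊆ B := by
    intro hsub
    exact absurd (le_trans (Cardinal.mk_le_mk_of_subset hsub) hB) (not_le.mpr hT)
  obtain ⟨U, hUT, hUB⟩ := Set.not_subset.mp this
  refine ⟨U, hUT, fun ξ hξ => ?_⟩
  have hUS : U ∉ S ξ := by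
    intro hmem
    apply hUB
    refine Set.mem_iUnion.mpr ⟨Ordinal.ToType.mk (o := lam.ord) ⟨ξ, hξ⟩, ?_⟩
    simpa using hmem
  simp only [S, Set.mem_setOf_eq, not_forall] at hUS
  obtain ⟨α, β, hcode, hne⟩ := hUS
  refine ⟨α, β, by tauto, ?_, ?_⟩
  · intro ζ hζ
    have := congrFun (congrArg Prod.fst hcode) (Ordinal.ToType.mk (o := ξ) ⟨ζ, hζ⟩)
    simp only [code, OrderIso.symm_apply_apply] at this
    exact iff_of_eq this
  · intro ε
    exact iff_of_eq (congrFun (congrArg Prod.snd hcode) ε)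
end

section
/- Let μ_l (l < ω) be an increasing sequence of cardinals. Suppose there exist distinct points x_ν (ν ∈ ⋃_n ∏_{l<n} μ_l) and open sets U_η (η ∈ ∏_{l<ω} μ_l) in a topological space such that U_η ∩ Z = {x_ν : ν = ρ⌢⟨ζ⟩ and (ρ is not an initial segment of η, or ρ ⊲ η and η(lg ρ) = ζ)}, where Z = {x_ν : ν}. Then there exist distinct points x'_ν and open sets U'_η such that U'_η ∩ Z' = {x'_ν ∈ Z' : ν is not an initial segment of η}, i.e., the 'complement-of-branch' basic configuration (clause (c) of Theorem 22) holds. -/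
open Cardinal

/-- A finite sequence of length `n` valid for the sequence of cardinals `μc`:
its entries below `n` are ordinals below `(μc l).ord`. -/
def ValidFin (μc : ℕ → Cardinal.{u}) (n : ℕ) (ν : ℕ → Ordinal.{u}) : Prop :=
  ∀ l < n, ν l < (μc l).ord

/-- An infinite branch valid for `μc`. -/
def ValidBr (μc : ℕ → Cardinal.{u}) (η : ℕ → Ordinal.{u}) : Prop :=
  ∀ l, η l < (μc l).ord

def itv (η : ℕ → Ordinal.{u}) (k : ℕ) : Ordinal.{u} :=
  if k % 2 = 1 ∧ 3 ≤ k then η ((k - 3) / 2) else 0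

lemma itv_odd (η : ℕ → Ordinal.{u}) (l : ℕ) : itv η (2 * l + 3) = η l := by
  rw [itv, if_pos (by omega)]
  congr 1
  omega

lemma itv_zero (η : ℕ → Ordinal.{u}) (k : ℕ) (h : k % 2 = 0 ∨ k < 3) : itv η k = 0 := by
  rw [itv, if_neg (by omega)]

def Sfun (n : ℕ) (ν : ℕ → Ordinal.{u}) (k : ℕ) : Ordinal.{u} :=
  if k = 2 * n + 2 then 1 else itv ν k

/-- suppose `μc` is an increasing sequence of cardinals and in a
topological space `(Ω, T)` there are pairwise distinct points `x n ν`
(`ν ∈ ∏_{l<n} μc l`) and open sets `U η` (`η ∈ ∏_{l<ω} μc l`) realizing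
configuration (d): `x n ν ∈ U η` iff `n ≥ 1` and (if `ν↾(n-1)` is an initial
segment of `η` then `η (n-1) = ν (n-1)`). Then there are pairwise distinct
points `x' n ν` and open sets `U' η` realizing the complement-of-branch
configuration (c): `x' n ν ∈ U' η` iff `ν` is not an initial segment of `η`. -/
theorem stmt_14 (μc : ℕ → Cardinal.{u}) (hmono : ∀ l, μc l < μc (l + 1))
    {Ω : Type u} (T : Set (Set Ω))
    (x : ℕ → (ℕ → Ordinal.{u}) → Ω)
    (hxdist : ∀ n ν m ρ, ValidFin μc n ν → ValidFin μc m ρ →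
      x n ν = x m ρ → n = m ∧ ∀ l < n, ν l = ρ l)
    (U : (ℕ → Ordinal.{u}) → Set Ω)
    (hUopen : ∀ η, ValidBr μc η → U η ∈ T)
    (hconf : ∀ η, ValidBr μc η → ∀ n ν, ValidFin μc n ν →
      (x n ν ∈ U η ↔ 1 ≤ n ∧ ((∀ l < n - 1, ν l = η l) → η (n - 1) = ν (n - 1)))) :
    ∃ x' : ℕ → (ℕ → Ordinal.{u}) → Ω, ∃ U' : (ℕ → Ordinal.{u}) → Set Ω,
      (∀ n ν m ρ, ValidFin μc n ν → ValidFin μc m ρ →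
        x' n ν = x' m ρ → n = m ∧ ∀ l < n, ν l = ρ l) ∧
      (∀ η, ValidBr μc η → U' η ∈ T) ∧
      (∀ η, ValidBr μc η → ∀ n ν, ValidFin μc n ν →
        (x' n ν ∈ U' η ↔ ¬ ∀ l < n, ν l = η l)) := by
  have hmle : ∀ {j k : ℕ}, j ≤ k → μc j ≤ μc k :=
    fun {j k} h => monotone_nat_of_le_succ (fun m => (hmono m).le) h
  by_cases h0 : μc 0 = 0
  · refine ⟨x, U, hxdist, ?_, ?_⟩
    · intro η hη
      exact absurd (hη 0) (by simp [h0])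
    · intro η hη
      exact absurd (hη 0) (by simp [h0])
  · have hpos : ∀ k, 0 < μc k := fun k =>
      lt_of_lt_of_le (lt_of_le_of_ne zero_le (Ne.symm h0)) (hmle (Nat.zero_le k))
    have h2 : ∀ k, 1 ≤ k → 1 < μc k := by
      intro k hk
      have h1 : 1 ≤ μc 0 := Cardinal.one_le_iff_pos.2 (hpos 0)
      exact lt_of_le_of_lt h1 (lt_of_lt_of_le (hmono 0) (hmle hk))
    have hzord : ∀ k, (0 : Ordinal.{u}) < (μc k).ord := by
      intro k
      rw [Cardinal.lt_ord]
      simpa using hpos k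
    have hoord : ∀ k, 1 ≤ k → (1 : Ordinal.{u}) < (μc k).ord := by
      intro k hk
      rw [Cardinal.lt_ord]
      simpa using h2 k hk
    -- validity of the interleaved branch
    have hGvalid : ∀ η, ValidBr μc η → ValidBr μc (itv η) := by
      intro η hη k
      by_cases hk : k % 2 = 1 ∧ 3 ≤ k
      · rw [itv, if_pos hk]
        exact lt_of_lt_of_le (hη _) (Cardinal.ord_le_ord.2 (hmle (by omega)))
      · rw [itv, if_neg hk]
        exact hzord k
    have hSvalid : ∀ n ν, ValidFin μc n ν → ValidFin μc (2 * n + 3) (Sfun n ν) := by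
      intro n ν hν k hk
      by_cases hk2 : k = 2 * n + 2
      · rw [Sfun, if_pos hk2]
        exact hoord k (by omega)
      · rw [Sfun, if_neg hk2]
        by_cases hk3 : k % 2 = 1 ∧ 3 ≤ k
        · rw [itv, if_pos hk3]
          have hlt : (k - 3) / 2 < n := by omega
          exact lt_of_lt_of_le (hν _ hlt) (Cardinal.ord_le_ord.2 (hmle (by omega)))
        · rw [itv, if_neg hk3]
          exact hzord k
    -- key combinatorial equivalence
    have hkey : ∀ n (ν η : ℕ → Ordinal.{u}),
        ((∀ l < 2 * n + 2, Sfun n ν l = itv η l) ↔ ∀ l < n, ν l = η l) := by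
      intro n ν η
      constructor
      · intro h l hl
        have := h (2 * l + 3) (by omega)
        rw [Sfun, if_neg (by omega), itv_odd, itv_odd] at this
        exact this
      · intro h l hl
        rw [Sfun, if_neg (by omega)]
        by_cases hk3 : l % 2 = 1 ∧ 3 ≤ l
        · obtain ⟨j, rfl⟩ : ∃ j, l = 2 * j + 3 := ⟨(l - 3) / 2, by omega⟩
          rw [itv_odd, itv_odd]
          exact h j (by omega)
        · rw [itv_zero ν l (by omega), itv_zero η l (by omega)]
    refine ⟨fun n ν => x (2 * n + 3) (Sfun n ν), fun η => U (itv η), ?_, ?_, ?_⟩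
    · intro n ν m ρ hν hρ heq
      obtain ⟨h1, h2'⟩ := hxdist _ _ _ _ (hSvalid n ν hν) (hSvalid m ρ hρ) heq
      have hnm : n = m := by omega
      subst hnm
      refine ⟨rfl, fun l hl => ?_⟩
      have := h2' (2 * l + 3) (by omega)
      rw [Sfun, Sfun, if_neg (by omega), if_neg (by omega), itv_odd, itv_odd] at this
      exact this
    · intro η hη
      exact hUopen _ (hGvalid η hη)
    · intro η hη n ν hν
      rw [hconf _ (hGvalid η hη) _ _ (hSvalid n ν hν)]
      have e1 : 2 * n + 3 - 1 = 2 * n + 2 := by omega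
      rw [e1]
      have e2 : itv η (2 * n + 2) = 0 := itv_zero η _ (by omega)
      have e3 : Sfun n ν (2 * n + 2) = 1 := by rw [Sfun, if_pos rfl]
      rw [e2, e3]
      constructor
      · rintro ⟨-, h⟩ hall
        exact zero_ne_one (h ((hkey n ν η).2 hall))
      · intro h
        exact ⟨by omega, fun hall => absurd ((hkey n ν η).1 hall) h⟩
end

section
/- Let T be a topology on a set Ω and suppose there exist points x_n ∈ Ω and open sets U_n ∈ T for n < ω such that: x_n ∈ U_n, x_n ∉ ⋃_{l<n} U_l, and x_l ∉ U_n for l < n. Then {U ∩ {x_n : n < ω} : U ∈ T} contains all subsets of the infinite set {x_n : n < ω}; in particular |T| ≥ 2^{ℵ₀}. -/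
open Cardinal

/-- if `T` is closed under arbitrary unions and there are points
`x n` and open sets `U n` with `x n ∈ U n`, `x n ∉ ⋃_{l<n} U l` and
`x l ∉ U n` for `l < n`, then every subset of `{x n : n < ω}` is the trace of
an open set; in particular `|T| ≥ 2 ^ ℵ₀`. -/
theorem stmt_15 {Ω : Type u} (T : Set (Set Ω)) (hT : ∀ S ⊆ T, ⋃₀ S ∈ T)
    (x : ℕ → Ω) (U : ℕ → Set Ω)
    (hUT : ∀ n, U n ∈ T) (hmem : ∀ n, x n ∈ U n)
    (hnot1 : ∀ n, x n ∉ ⋃ l < n, U l)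
    (hnot2 : ∀ l n, l < n → x l ∉ U n) :
    (∀ A : Set ℕ, ∃ V ∈ T, V ∩ Set.range x = x '' A) ∧ 2 ^ ℵ₀ ≤ #T := by
  have hinj : Function.Injective x := by
    intro a b hab
    by_contra hne
    rcases Nat.lt_or_ge a b with h | h
    · exact hnot2 a b h (hab ▸ hmem b)
    · have h' : b < a := lt_of_le_of_ne h (Ne.symm hne)
      exact hnot2 b a h' (hab ▸ hmem a)
  have key : ∀ A : Set ℕ, (⋃₀ (U '' A)) ∩ Set.range x = x '' A := by
    intro A
    ext y
    constructor
    · rintro ⟨⟨_, ⟨n, hnA, rfl⟩, hyV⟩, m, rfl⟩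
      have hmn : m = n := by
        by_contra hne
        rcases Nat.lt_or_ge m n with h | h
        · exact hnot2 m n h hyV
        · have h' : n < m := lt_of_le_of_ne h (Ne.symm hne)
          exact hnot1 m (Set.mem_biUnion h' hyV)
      exact ⟨m, hmn ▸ hnA, rfl⟩
    · rintro ⟨n, hnA, rfl⟩
      exact ⟨⟨U n, ⟨n, hnA, rfl⟩, hmem n⟩, n, rfl⟩
  have hmemT : ∀ A : Set ℕ, ⋃₀ (U '' A) ∈ T := fun A =>
    hT _ (by rintro _ ⟨n, _, rfl⟩; exact hUT n)
  refine ⟨fun A => ⟨⋃₀ (U '' A), hmemT A, key A⟩, ?_⟩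
  have hfinj : Function.Injective (fun A : Set ℕ => (⟨⋃₀ (U '' A), hmemT A⟩ : T)) := by
    intro A B hAB
    have h1 : (⋃₀ (U '' A)) = ⋃₀ (U '' B) := congrArg Subtype.val hAB
    have h2 : x '' A = x '' B := by rw [← key A, ← key B, h1]
    exact (Set.image_eq_image hinj).mp h2
  have h := Cardinal.lift_mk_le'.mpr ⟨⟨_, hfinj⟩⟩
  simpa using h
end

section
/- Let T be a topology on Ω. Suppose P = {(U,V) : U ⊆ V, U, V ∈ T, V \ U ∉ I} where I is the ideal {Z ⊆ Ω : |{U ∩ Z : U ∈ T}| < μ}, and suppose for every (U₀,U₁) ∈ P there exists W ∈ T with (U₀,W) ∈ P and (W,U₁) ∈ P. Then there exist distinct points x_q ∈ Ω for q ∈ ℚ such that for every real r, some open set U ∈ T satisfies U ∩ {x_q : q ∈ ℚ} = {x_q : q < r}. -/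
open Cardinal

/-- `Z` is in the ideal `I = {Z : |{U ∩ Z : U ∈ T}| < μ}`. -/
def InSmallIdeal {Ω : Type u} (T : Set (Set Ω)) (μ : Cardinal.{u}) (Z : Set Ω) : Prop :=
  #{V : Set Ω // ∃ U ∈ T, V = U ∩ Z} < μ

lemma inSmallIdeal_mono {Ω : Type u} (T : Set (Set Ω)) (μ : Cardinal.{u}) {Z Z' : Set Ω}
    (h : Z ⊆ Z') (hZ' : InSmallIdeal T μ Z') : InSmallIdeal T μ Z := by
  refine lt_of_le_of_lt ?_ hZ'
  have hinj : Function.Injective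
      (fun V : {V : Set Ω // ∃ U ∈ T, V = U ∩ Z} =>
        (⟨V.2.choose ∩ Z', V.2.choose, V.2.choose_spec.1, rfl⟩ :
          {V : Set Ω // ∃ U ∈ T, V = U ∩ Z'})) := by
    intro V₁ V₂ hV
    have h1 := V₁.2.choose_spec.2
    have h2 := V₂.2.choose_spec.2
    have hval : V₁.2.choose ∩ Z' = V₂.2.choose ∩ Z' := congrArg Subtype.val hV
    apply Subtype.ext
    have e : ∀ U : Set Ω, U ∩ Z = (U ∩ Z') ∩ Z := by
      intro U
      rw [Set.inter_assoc, Set.inter_eq_right.mpr h]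
    rw [h1, h2, e V₁.2.choose, e V₂.2.choose, hval]
  exact Cardinal.mk_le_of_injective hinj

lemma nonempty_of_not_small {Ω : Type u} {T : Set (Set Ω)} {μ : Cardinal.{u}}
    (hunc : ℵ₀ < μ) {Z : Set Ω} (h : ¬ InSmallIdeal T μ Z) : Z.Nonempty := by
  rw [Set.nonempty_iff_ne_empty]
  rintro rfl
  apply h
  unfold InSmallIdeal
  have hsub : ({V : Set Ω | ∃ U ∈ T, V = U ∩ (∅ : Set Ω)}).Subsingleton := by
    rintro V₁ ⟨U₁, -, rfl⟩ V₂ ⟨U₂, -, rfl⟩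
    simp
  calc #{V : Set Ω // ∃ U ∈ T, V = U ∩ (∅ : Set Ω)} ≤ 1 :=
        Cardinal.mk_le_one_iff_set_subsingleton.mpr hsub
    _ < μ := lt_trans Cardinal.one_lt_aleph0 hunc

/-- The invariant maintained along the recursive construction. -/
def GoodChain {Ω : Type u} (T : Set (Set Ω)) (μ : Cardinal.{u}) (r : ℕ → ℚ)
    (n : ℕ) (f : ℕ → Set Ω × Set Ω) : Prop :=
  (∀ i < n, (f i).1 ∈ T ∧ (f i).2 ∈ T ∧ (f i).1 ⊆ (f i).2 ∧
      ¬ InSmallIdeal T μ ((f i).2 \ (f i).1) ∧ ¬ InSmallIdeal T μ (f i).1 ∧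
      ¬ InSmallIdeal T μ (Set.univ \ (f i).2)) ∧
  (∀ i j, i < n → j < n → r i < r j →
      (f i).2 ⊆ (f j).1 ∧ ¬ InSmallIdeal T μ ((f j).1 \ (f i).2))

lemma exists_chain {Ω : Type u} (T : Set (Set Ω)) (μ : Cardinal.{u})
    (hempty : ∅ ∈ T) (huniv : Set.univ ∈ T)
    (hproper : ¬ InSmallIdeal T μ Set.univ)
    (hdense : ∀ U₀ U₁, U₀ ∈ T → U₁ ∈ T → U₀ ⊆ U₁ → ¬ InSmallIdeal T μ (U₁ \ U₀) →
      ∃ W ∈ T, U₀ ⊆ W ∧ W ⊆ U₁ ∧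
        ¬ InSmallIdeal T μ (W \ U₀) ∧ ¬ InSmallIdeal T μ (U₁ \ W)) :
    ∃ A B : ℕ → Set Ω,
      (∀ n, A n ∈ T ∧ B n ∈ T ∧ A n ⊆ B n ∧ ¬ InSmallIdeal T μ (B n \ A n)) ∧
      (∀ i j : ℕ, ((Denumerable.eqv ℚ).symm i : ℚ) < (Denumerable.eqv ℚ).symm j →
        B i ⊆ A j) := by
  classical
  set r : ℕ → ℚ := fun n => (Denumerable.eqv ℚ).symm n with hrdef
  have hrinj : Function.Injective r := (Denumerable.eqv ℚ).symm.injective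
  have NImono : ∀ {Z Z' : Set Ω}, Z ⊆ Z' → ¬ InSmallIdeal T μ Z → ¬ InSmallIdeal T μ Z' :=
    fun h hZ hZ' => hZ (inSmallIdeal_mono T μ h hZ')
  have step2 : ∀ L U : Set Ω, L ∈ T → U ∈ T → L ⊆ U → ¬ InSmallIdeal T μ (U \ L) →
      ∃ W W' : Set Ω, W ∈ T ∧ W' ∈ T ∧ L ⊆ W ∧ W ⊆ W' ∧ W' ⊆ U ∧
        ¬ InSmallIdeal T μ (W \ L) ∧ ¬ InSmallIdeal T μ (W' \ W) ∧
        ¬ InSmallIdeal T μ (U \ W') := by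
    intro L U hL hU hLU hNI
    obtain ⟨W, hW, hLW, hWU, hNI1, hNI2⟩ := hdense L U hL hU hLU hNI
    obtain ⟨W', hW', hWW', hW'U, hNI3, hNI4⟩ := hdense W U hW hU hWU hNI2
    exact ⟨W, W', hW, hW', hLW, hWW', hW'U, hNI1, hNI3, hNI4⟩
  have hstep : ∀ n (f : ℕ → Set Ω × Set Ω), ∃ p : Set Ω × Set Ω,
      GoodChain T μ r n f → GoodChain T μ r (n+1) (Function.update f n p) := by
    intro n f
    by_cases hg : GoodChain T μ r n f
    swap
    · exact ⟨(∅, ∅), fun h => absurd h hg⟩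
    obtain ⟨g1, g2⟩ := hg
    set sB : Finset ℕ := (Finset.range n).filter (fun i => r i < r n) with hsB
    set sA : Finset ℕ := (Finset.range n).filter (fun j => r n < r j) with hsA
    have hBelowProp : ∀ i₀ ∈ sB, (∀ i ∈ sB, r i ≤ r i₀) →
        ∀ i < n, r i < r n →
          (f i).2 ⊆ (f i₀).2 ∧
            ((f i).2 = (f i₀).2 ∨ ¬ InSmallIdeal T μ ((f i₀).2 \ (f i).2)) := by
      intro i₀ hi₀ hmax i hi hri
      have hiB : i ∈ sB := Finset.mem_filter.mpr ⟨Finset.mem_range.mpr hi, hri⟩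
      have hi₀n : i₀ < n := Finset.mem_range.mp (Finset.mem_filter.mp hi₀).1
      rcases eq_or_lt_of_le (hmax i hiB) with heq | hlt
      · have : i = i₀ := hrinj heq
        subst this
        exact ⟨subset_rfl, Or.inl rfl⟩
      · obtain ⟨hsub, hni⟩ := g2 i i₀ hi hi₀n hlt
        have hsub2 : (f i₀).1 ⊆ (f i₀).2 := (g1 i₀ hi₀n).2.2.1
        exact ⟨hsub.trans hsub2, Or.inr (NImono (Set.diff_subset_diff_left hsub2) hni)⟩
    have hAboveProp : ∀ j₀ ∈ sA, (∀ j ∈ sA, r j₀ ≤ r j) →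
        ∀ j < n, r n < r j →
          (f j₀).1 ⊆ (f j).1 ∧
            ((f j).1 = (f j₀).1 ∨ ¬ InSmallIdeal T μ ((f j).1 \ (f j₀).1)) := by
      intro j₀ hj₀ hmin j hj hrj
      have hjA : j ∈ sA := Finset.mem_filter.mpr ⟨Finset.mem_range.mpr hj, hrj⟩
      have hj₀n : j₀ < n := Finset.mem_range.mp (Finset.mem_filter.mp hj₀).1
      rcases eq_or_lt_of_le (hmin j hjA) with heq | hlt
      · have : j = j₀ := hrinj heq.symm
        subst this
        exact ⟨subset_rfl, Or.inl rfl⟩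
      · obtain ⟨hsub, hni⟩ := g2 j₀ j hj₀n hj hlt
        have hsub2 : (f j₀).1 ⊆ (f j₀).2 := (g1 j₀ hj₀n).2.2.1
        exact ⟨hsub2.trans hsub, Or.inr (NImono (Set.diff_subset_diff_right hsub2) hni)⟩
    have key : ∃ L U : Set Ω, L ∈ T ∧ U ∈ T ∧ L ⊆ U ∧ ¬ InSmallIdeal T μ (U \ L) ∧
        (∀ i < n, r i < r n →
          (f i).2 ⊆ L ∧ ((f i).2 = L ∨ ¬ InSmallIdeal T μ (L \ (f i).2))) ∧
        (∀ j < n, r n < r j →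
          U ⊆ (f j).1 ∧ ((f j).1 = U ∨ ¬ InSmallIdeal T μ ((f j).1 \ U))) ∧
        (¬ InSmallIdeal T μ L ∨ L = ∅) ∧
        (¬ InSmallIdeal T μ (Set.univ \ U) ∨ U = Set.univ) := by
      rcases sB.eq_empty_or_nonempty with hBe | hBne <;>
        rcases sA.eq_empty_or_nonempty with hAe | hAne
      · -- both empty
        refine ⟨∅, Set.univ, hempty, huniv, Set.subset_univ _, ?_, ?_, ?_, Or.inr rfl,
          Or.inr rfl⟩
        · rw [Set.diff_empty]; exact hproper
        · intro i hi hri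
          have hmemB : i ∈ sB := Finset.mem_filter.mpr ⟨Finset.mem_range.mpr hi, hri⟩
          rw [hBe] at hmemB
          exact absurd hmemB (Finset.notMem_empty i)
        · intro j hj hrj
          have hmemA : j ∈ sA := Finset.mem_filter.mpr ⟨Finset.mem_range.mpr hj, hrj⟩
          rw [hAe] at hmemA
          exact absurd hmemA (Finset.notMem_empty j)
      · -- below empty, above nonempty
        obtain ⟨j₀, hj₀, hmin⟩ := Finset.exists_min_image sA r hAne
        have hj₀n : j₀ < n := Finset.mem_range.mp (Finset.mem_filter.mp hj₀).1
        refine ⟨∅, (f j₀).1, hempty, (g1 j₀ hj₀n).1, Set.empty_subset _, ?_, ?_,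
          hAboveProp j₀ hj₀ hmin, Or.inr rfl, ?_⟩
        · rw [Set.diff_empty]; exact (g1 j₀ hj₀n).2.2.2.2.1
        · intro i hi hri
          have hmemB : i ∈ sB := Finset.mem_filter.mpr ⟨Finset.mem_range.mpr hi, hri⟩
          rw [hBe] at hmemB
          exact absurd hmemB (Finset.notMem_empty i)
        · exact Or.inl (NImono (Set.diff_subset_diff_right (g1 j₀ hj₀n).2.2.1)
            (g1 j₀ hj₀n).2.2.2.2.2)
      · -- below nonempty, above empty
        obtain ⟨i₀, hi₀, hmax⟩ := Finset.exists_max_image sB r hBne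
        have hi₀n : i₀ < n := Finset.mem_range.mp (Finset.mem_filter.mp hi₀).1
        refine ⟨(f i₀).2, Set.univ, (g1 i₀ hi₀n).2.1, huniv, Set.subset_univ _,
          (g1 i₀ hi₀n).2.2.2.2.2, hBelowProp i₀ hi₀ hmax, ?_, ?_, Or.inr rfl⟩
        · intro j hj hrj
          have hmemA : j ∈ sA := Finset.mem_filter.mpr ⟨Finset.mem_range.mpr hj, hrj⟩
          rw [hAe] at hmemA
          exact absurd hmemA (Finset.notMem_empty j)
        · exact Or.inl (NImono (g1 i₀ hi₀n).2.2.1 (g1 i₀ hi₀n).2.2.2.2.1)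
      · -- both nonempty
        obtain ⟨i₀, hi₀, hmax⟩ := Finset.exists_max_image sB r hBne
        obtain ⟨j₀, hj₀, hmin⟩ := Finset.exists_min_image sA r hAne
        have hi₀n : i₀ < n := Finset.mem_range.mp (Finset.mem_filter.mp hi₀).1
        have hj₀n : j₀ < n := Finset.mem_range.mp (Finset.mem_filter.mp hj₀).1
        have hi₀r : r i₀ < r n := (Finset.mem_filter.mp hi₀).2
        have hj₀r : r n < r j₀ := (Finset.mem_filter.mp hj₀).2
        obtain ⟨hsub, hni⟩ := g2 i₀ j₀ hi₀n hj₀n (hi₀r.trans hj₀r)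
        refine ⟨(f i₀).2, (f j₀).1, (g1 i₀ hi₀n).2.1, (g1 j₀ hj₀n).1, hsub, hni,
          hBelowProp i₀ hi₀ hmax, hAboveProp j₀ hj₀ hmin, ?_, ?_⟩
        · exact Or.inl (NImono (g1 i₀ hi₀n).2.2.1 (g1 i₀ hi₀n).2.2.2.2.1)
        · exact Or.inl (NImono (Set.diff_subset_diff_right (g1 j₀ hj₀n).2.2.1)
            (g1 j₀ hj₀n).2.2.2.2.2)
    obtain ⟨L, U, hLT, hUT, hLU, hNIUL, hBelow, hAbove, hNIL, hNIU⟩ := key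
    obtain ⟨W, W', hWT, hW'T, hLW, hWW', hW'U, hNI1, hNI2, hNI3⟩ :=
      step2 L U hLT hUT hLU hNIUL
    refine ⟨(W, W'), fun _ => ⟨?_, ?_⟩⟩
    · intro i hi
      rcases Nat.lt_or_ge i n with h | h
      · rw [Function.update_of_ne (Nat.ne_of_lt h)]
        exact g1 i h
      · have hin : i = n := by omega
        subst hin
        rw [Function.update_self]
        refine ⟨hWT, hW'T, hWW', hNI2, ?_, ?_⟩
        · rcases hNIL with h' | h'
          · exact NImono hLW h'
          · subst h'
            rw [Set.diff_empty] at hNI1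
            exact hNI1
        · rcases hNIU with h' | h'
          · exact NImono (Set.diff_subset_diff_right hW'U) h'
          · subst h'
            exact hNI3
    · intro i j hi hj hij
      rcases Nat.lt_or_ge i n with h1 | h1 <;> rcases Nat.lt_or_ge j n with h2 | h2
      · rw [Function.update_of_ne (Nat.ne_of_lt h1), Function.update_of_ne (Nat.ne_of_lt h2)]
        exact g2 i j h1 h2 hij
      · have hjn : j = n := by omega
        subst hjn
        rw [Function.update_of_ne (Nat.ne_of_lt h1), Function.update_self]
        obtain ⟨hsub, hcase⟩ := hBelow i h1 hij
        refine ⟨hsub.trans hLW, ?_⟩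
        rcases hcase with heq | hni
        · rw [heq]; exact hNI1
        · exact NImono (Set.diff_subset_diff_left hLW) hni
      · have hin : i = n := by omega
        subst hin
        rw [Function.update_of_ne (Nat.ne_of_lt h2), Function.update_self]
        obtain ⟨hsub, hcase⟩ := hAbove j h2 hij
        refine ⟨hW'U.trans hsub, ?_⟩
        rcases hcase with heq | hni
        · rw [heq]; exact hNI3
        · exact NImono (Set.diff_subset_diff_right hW'U) hni
      · have hin : i = n := by omega
        have hjn : j = n := by omega
        subst hin; subst hjn
        exact absurd hij (lt_irrefl _)
  choose F hF using hstep
  let G : ℕ → ℕ → Set Ω × Set Ω := fun n =>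
    Nat.rec (fun _ => (∅, ∅)) (fun m prev => Function.update prev m (F m prev)) n
  have hGsucc : ∀ n, G (n+1) = Function.update (G n) n (F n (G n)) := fun n => rfl
  have hGagree : ∀ n k, k < n → G n k = G (k+1) k := by
    intro n
    induction n with
    | zero => intro k hk; omega
    | succ m ih =>
      intro k hk
      rcases Nat.lt_or_ge k m with h | h
      · rw [hGsucc, Function.update_of_ne (by omega), ih k h]
      · have : k = m := by omega
        subst this; rfl
  have hGood : ∀ n, GoodChain T μ r n (G n) := by
    intro n
    induction n with
    | zero =>
      exact ⟨fun i hi => absurd hi (by omega), fun i j hi _ _ => absurd hi (by omega)⟩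
    | succ m ih =>
      rw [hGsucc]
      exact hF m (G m) ih
  refine ⟨fun n => (G (n+1) n).1, fun n => (G (n+1) n).2, ?_, ?_⟩
  · intro n
    have h := (hGood (n+1)).1 n (by omega)
    exact ⟨h.1, h.2.1, h.2.2.1, h.2.2.2.1⟩
  · intro i j hij
    have hij' : r i < r j := hij
    have hi : i < max i j + 1 := Nat.lt_succ_of_le (le_max_left i j)
    have hj : j < max i j + 1 := Nat.lt_succ_of_le (le_max_right i j)
    have h2 := (hGood (max i j + 1)).2 i j hi hj hij'
    rw [hGagree (max i j + 1) i hi, hGagree (max i j + 1) j hj] at h2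
    exact h2.1

/-- let `μ` be regular uncountable, `T` a topology on `Ω` and
`I = {Z : |{U ∩ Z : U ∈ T}| < μ}` a proper ideal. Let
`P = {(U,V) : U ⊆ V open, V \ U ∉ I}` and suppose for every `(U₀,U₁) ∈ P` there
is `W` open with `(U₀,W), (W,U₁) ∈ P`. Then there are distinct points
`x q ∈ Ω` for `q ∈ ℚ` such that for every real `r` some open `U` satisfies
`U ∩ {x q : q ∈ ℚ} = {x q : (q : ℝ) < r}`. -/
theorem stmt_16 {Ω : Type u} (T : Set (Set Ω)) (μ : Cardinal.{u})
    (hreg : μ.IsRegular) (hunc : ℵ₀ < μ)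
    (hempty : ∅ ∈ T) (huniv : Set.univ ∈ T) (hUnion : ∀ S ⊆ T, ⋃₀ S ∈ T)
    (hproper : ¬ InSmallIdeal T μ Set.univ)
    (hdense : ∀ U₀ U₁, U₀ ∈ T → U₁ ∈ T → U₀ ⊆ U₁ → ¬ InSmallIdeal T μ (U₁ \ U₀) →
      ∃ W ∈ T, U₀ ⊆ W ∧ W ⊆ U₁ ∧
        ¬ InSmallIdeal T μ (W \ U₀) ∧ ¬ InSmallIdeal T μ (U₁ \ W)) :
    ∃ x : ℚ → Ω, Function.Injective x ∧
      ∀ r : ℝ, ∃ U ∈ T, U ∩ Set.range x = x '' {q : ℚ | (q : ℝ) < r} := by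
  classical
  obtain ⟨A, B, h1, h2⟩ := exists_chain T μ hempty huniv hproper hdense
  let e : ℚ ≃ ℕ := Denumerable.eqv ℚ
  have hx : ∀ n, (B n \ A n).Nonempty := fun n => nonempty_of_not_small hunc (h1 n).2.2.2
  choose y hy using hx
  have hBA : ∀ p q : ℚ, p < q → B (e p) ⊆ A (e q) := by
    intro p q hpq
    apply h2
    simpa [e] using hpq
  have hmem : ∀ q : ℚ, y (e q) ∈ B (e q) := fun q => (hy (e q)).1
  have hnot : ∀ q : ℚ, y (e q) ∉ A (e q) := fun q => (hy (e q)).2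
  refine ⟨fun q => y (e q), ?_, ?_⟩
  · intro p q hpq'
    simp only at hpq'
    by_contra hne
    rcases Ne.lt_or_gt hne with h | h
    · exact hnot q (by rw [← hpq']; exact hBA p q h (hmem p))
    · exact hnot p (by rw [hpq']; exact hBA q p h (hmem q))
  · intro ρ
    refine ⟨⋃₀ {S | ∃ q : ℚ, (q : ℝ) < ρ ∧ S = B (e q)}, hUnion _ ?_, ?_⟩
    · rintro S ⟨q, -, rfl⟩
      exact (h1 (e q)).2.1
    · ext z
      simp only [Set.mem_inter_iff, Set.mem_sUnion, Set.mem_range, Set.mem_image,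
        Set.mem_setOf_eq]
      constructor
      · rintro ⟨⟨S, ⟨p, hp, rfl⟩, hzS⟩, ⟨q, rfl⟩⟩
        refine ⟨q, ?_, rfl⟩
        by_contra hqr
        push_neg at hqr
        have hpq : p < q := by exact_mod_cast lt_of_lt_of_le hp hqr
        exact hnot q (hBA p q hpq hzS)
      · rintro ⟨q, hq, rfl⟩
        exact ⟨⟨B (e q), ⟨q, hq, rfl⟩, hmem q⟩, ⟨q, rfl⟩⟩
end

section
/- For each n, under the hypotheses 2^{λ_n} < λ ≤ μ, λ strong limit of cofinality ℵ₀ with ℵ₀ ≤ μ_n < λ, and cov(μ, λ_n⁺, λ_n⁺, μ_n⁺) ≤ μ, there is a family R of cardinality ≤ μ of partial functions from λ_n to μ such that: for every total function f : λ_n → μ there is a partition ⟨r_ζ : ζ < μ_n⟩ of λ_n into pairwise disjoint sets with union λ_n such that f ↾ r_ζ ∈ R for every ζ < μ_n. -/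
open Cardinal

/-- `covC μ lam kap` is Shelah's `cov(μ, lam⁺, lam⁺, kap)`. -/
noncomputable def covC (μ lam kap : Cardinal.{u}) : Cardinal.{u} :=
  sInf { c | ∃ P : Set (Set μ.ord.ToType), #P = c ∧ (∀ a ∈ P, #a ≤ lam) ∧
    ∀ a : Set μ.ord.ToType, #a ≤ lam → ∃ Q ⊆ P, #Q < kap ∧ a ⊆ ⋃₀ Q }

open Classical in
/-- Observation 3: under `2 ^ lamn < lam ≤ μ < 2 ^ lam`, `lam`
strong limit of cofinality `ℵ₀`, `ℵ₀ ≤ mun < lam` and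
`cov(μ, lamn⁺, lamn⁺, mun⁺) ≤ μ`, there is a family `R` of at most `μ` partial
functions from `lamn` to `μ` (encoded as `Option`-valued functions) such that
every total `f : lamn → μ` admits a partition `⟨r ζ : ζ < mun⟩` of `lamn` with
`f ↾ r ζ ∈ R` for every `ζ`. -/
theorem stmt_19 (lamn mun lam μ : Cardinal.{u})
    (h1 : 2 ^ lamn < lam) (h2 : lam ≤ μ) (h3 : μ < 2 ^ lam)
    (h4 : lam.IsStrongLimit) (h5 : lam.ord.cof = ℵ₀)
    (h6 : ℵ₀ ≤ mun) (h7 : mun < lam)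
    (h8 : covC μ lamn (Order.succ mun) ≤ μ) :
    ∃ R : Set (lamn.ord.ToType → Option μ.ord.ToType), #R ≤ μ ∧
      ∀ f : lamn.ord.ToType → μ.ord.ToType,
        ∃ r : mun.ord.ToType → Set lamn.ord.ToType,
          (∀ ζ ξ, ζ ≠ ξ → Disjoint (r ζ) (r ξ)) ∧
          (⋃ ζ, r ζ) = Set.univ ∧
          ∀ ζ, (fun i => if i ∈ r ζ then some (f i) else none) ∈ R := by
  have hμinf : ℵ₀ ≤ μ := h4.aleph0_le.trans h2
  -- extract a covering family P from h8
  obtain ⟨P, hPμ, hPsmall, hPcov⟩ :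
      ∃ P : Set (Set μ.ord.ToType), #P ≤ μ ∧ (∀ a ∈ P, #a ≤ lamn) ∧
        ∀ a : Set μ.ord.ToType, #a ≤ lamn → ∃ Q ⊆ P, #Q < Order.succ mun ∧ a ⊆ ⋃₀ Q := by
    have hne : { c | ∃ P : Set (Set μ.ord.ToType), #P = c ∧ (∀ a ∈ P, #a ≤ lamn) ∧
        ∀ a : Set μ.ord.ToType, #a ≤ lamn → ∃ Q ⊆ P, #Q < Order.succ mun ∧
          a ⊆ ⋃₀ Q }.Nonempty := by
      refine ⟨_, {a : Set μ.ord.ToType | #a ≤ lamn}, rfl, fun a ha => ha,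
        fun a ha => ⟨{a}, by simpa using ha, ?_, by simp⟩⟩
      have : (1 : Cardinal) ≤ mun := le_trans (le_of_lt one_lt_aleph0) h6
      simpa using lt_of_le_of_lt this (Order.lt_succ mun)
    obtain ⟨P, hPcard, hPsmall, hPcov⟩ := csInf_mem hne
    exact ⟨P, hPcard ▸ h8, hPsmall, hPcov⟩
  -- bound on the number of partial functions into a fixed small set
  have hK : (lamn + 1) ^ lamn ≤ μ := by
    rcases lt_or_ge lamn ℵ₀ with hl | hl
    · exact le_trans (le_of_lt (power_lt_aleph0 (add_lt_aleph0 hl one_lt_aleph0) hl)) hμinf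
    · rw [add_one_eq hl, power_self_eq hl]
      exact le_trans h1.le h2
  -- the family R
  set F : ((a : ↥P) × (lamn.ord.ToType → Option ↥(a.1))) →
      (lamn.ord.ToType → Option μ.ord.ToType) :=
    fun p i => (p.2 i).map Subtype.val with hF
  refine ⟨insert (fun _ => none) (Set.range F), ?_, ?_⟩
  · -- cardinality bound
    refine le_trans mk_insert_le ?_
    have hdom : #((a : ↥P) × (lamn.ord.ToType → Option ↥(a.1))) ≤ μ := by
      rw [mk_sigma]
      have hterm : ∀ a : ↥P, #(lamn.ord.ToType → Option ↥(a.1)) ≤ (lamn + 1) ^ lamn := by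
        intro a
        have : #(lamn.ord.ToType → Option ↥(a.1)) = (#↥(a.1) + 1) ^ lamn := by
          rw [← Cardinal.power_def, mk_option, mk_ord_toType]
        rw [this]
        exact power_le_power_right (add_le_add_left (hPsmall a.1 a.2) 1)
      calc Cardinal.sum (fun a : ↥P => #(lamn.ord.ToType → Option ↥(a.1)))
          ≤ Cardinal.sum (fun _ : ↥P => (lamn + 1) ^ lamn) := Cardinal.sum_le_sum _ _ hterm
        _ = #↥P * ((lamn + 1) ^ lamn) := Cardinal.sum_const' _ _
        _ ≤ μ * μ := mul_le_mul' hPμ hK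
        _ = μ := mul_eq_self hμinf
    have : #↥(Set.range F) ≤ μ := le_trans mk_range_le hdom
    calc #↥(Set.range F) + 1 ≤ μ + 1 := add_le_add_left this 1
      _ = μ := add_one_eq hμinf
  · -- covering property
    intro f
    have hrange : #↥(Set.range f) ≤ lamn := by
      have := mk_range_le (f := f)
      rwa [mk_ord_toType] at this
    obtain ⟨Q, hQP, hQlt, hQcov⟩ := hPcov (Set.range f) hrange
    have hQmun : #↥Q ≤ #(mun.ord.ToType) := by
      rw [mk_ord_toType]; exact Order.lt_succ_iff.mp hQlt
    obtain ⟨j⟩ := Cardinal.le_def _ _ |>.mp hQmun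
    set g : mun.ord.ToType → Set μ.ord.ToType :=
      Function.extend (⇑j) (fun q => (q : Set μ.ord.ToType)) (fun _ => ∅) with hg
    have hgq : ∀ q : ↥Q, g (j q) = q := fun q =>
      j.injective.extend_apply (fun q => (q : Set μ.ord.ToType)) _ q
    have hgcases : ∀ ζ, g ζ ∈ Q ∨ g ζ = ∅ := by
      intro ζ
      rw [hg, Function.extend_def]
      split
      · rename_i h
        exact Or.inl (Classical.choose h).2
      · exact Or.inr rfl
    refine ⟨fun ζ => {i | f i ∈ g ζ ∧ ∀ ξ, ξ < ζ → f i ∉ g ξ}, ?_, ?_, ?_⟩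
    · intro ζ ξ hne
      rcases hne.lt_or_gt with hlt | hlt
      · rw [Set.disjoint_left]
        rintro i ⟨hi1, -⟩ ⟨-, hi2⟩
        exact hi2 ζ hlt hi1
      · rw [Set.disjoint_left]
        rintro i ⟨-, hi2⟩ ⟨hi1, -⟩
        exact hi2 ξ hlt hi1
    · refine Set.eq_univ_of_forall fun i => ?_
      obtain ⟨t, htQ, hti⟩ := hQcov ⟨i, rfl⟩
      have hS : {ζ | f i ∈ g ζ}.Nonempty := ⟨j ⟨t, htQ⟩, by
        show f i ∈ g (j ⟨t, htQ⟩)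
        rw [hgq]; exact hti⟩
      have wf : WellFounded ((· < ·) : mun.ord.ToType → mun.ord.ToType → Prop) :=
        wellFounded_lt
      exact Set.mem_iUnion.mpr ⟨wf.min _ hS, wf.min_mem _ hS,
        fun ξ hξ hmem => wf.not_lt_min _ hmem hξ⟩
    · intro ζ
      rcases hgcases ζ with hq | he
      · refine Set.mem_insert_iff.mpr (Or.inr ?_)
        refine ⟨⟨⟨g ζ, hQP hq⟩,
          fun i => if hi : i ∈ {i | f i ∈ g ζ ∧ ∀ ξ, ξ < ζ → f i ∉ g ξ}
            then some ⟨f i, hi.1⟩ else none⟩, ?_⟩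
        funext i
        by_cases hi : i ∈ {i | f i ∈ g ζ ∧ ∀ ξ, ξ < ζ → f i ∉ g ξ}
        · rw [hF]
          dsimp only
          rw [dif_pos hi, if_pos hi]
          rfl
        · rw [hF]
          dsimp only
          rw [dif_neg hi, if_neg hi]
          rfl
      · refine Set.mem_insert_iff.mpr (Or.inl ?_)
        funext i
        have : i ∉ {i | f i ∈ g ζ ∧ ∀ ξ, ξ < ζ → f i ∉ g ξ} := by
          rintro ⟨hi1, -⟩
          rw [he] at hi1
          exact hi1
        simp [this]
end
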